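/- Let g : ℝ → ℝ be differentiable, non-decreasing, and convex, w ∈ ℝ^d, x ∈ ℝ^d, y ∈ {−1, 1}, and ε > 0. Then max over x' with ‖x' − x‖_∞ ≤ ε of g(−y⟨w, x'⟩) equals g(−y⟨w, x⟩ + ε‖w‖₁). -/

import Mathlib

/-- For a differentiable, non-decreasing, convex `g`, the adversarial value of the
one-layer loss `g(-y⟨w,x'⟩)` over the `ℓ_∞` ball of radius `ε` around `x` equals
the soft-margin value `g(-y⟨w,x⟩ + ε‖w‖₁)`. -/
theorem one_layer_adversarial_loss (d : ℕ) (g : ℝ → ℝ)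
    (hdiff : Differentiable ℝ g) (hmono : Monotone g) (hconv : ConvexOn ℝ Set.univ g)
    (w x : Fin d → ℝ) (y : ℝ) (hy : y = 1 ∨ y = -1) (ε : ℝ) (hε : 0 < ε) :
    IsGreatest
      {v : ℝ | ∃ x' : Fin d → ℝ, (∀ i, |x' i - x i| ≤ ε) ∧
        v = g (-y * ∑ i, w i * x' i)}
      (g (-y * ∑ i, w i * x i + ε * ∑ i, |w i|)) := by
  have hy2 : y * y = 1 := by rcases hy with h | h <;> simp [h]
  have habsy : |y| = 1 := by rcases hy with h | h <;> simp [h]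
  constructor
  · refine ⟨fun i => x i - y * ε * Real.sign (w i), ?_, ?_⟩
    · intro i
      have : |x i - y * ε * Real.sign (w i) - x i| = ε * |Real.sign (w i)| := by
        rw [show x i - y * ε * Real.sign (w i) - x i = -(y * ε * Real.sign (w i)) by ring]
        rw [abs_neg, abs_mul, abs_mul, habsy, abs_of_pos hε]
        ring
      rw [this]
      calc ε * |Real.sign (w i)| ≤ ε * 1 := by
            apply mul_le_mul_of_nonneg_left _ hε.le
            rcases lt_trichotomy (w i) 0 with h | h | h
            · simp [Real.sign_of_neg h]
            · simp [h]
            · simp [Real.sign_of_pos h]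
        _ = ε := mul_one ε
    · congr 1
      have key : ∀ i, w i * (x i - y * ε * Real.sign (w i))
          = w i * x i - y * ε * |w i| := by
        intro i
        have : w i * Real.sign (w i) = |w i| := by
          rcases lt_trichotomy (w i) 0 with h | h | h
          · rw [Real.sign_of_neg h, abs_of_neg h]; ring
          · simp [h]
          · rw [Real.sign_of_pos h, abs_of_pos h, mul_one]
        rw [mul_sub, ← this]; ring
      simp only [key, Finset.sum_sub_distrib]
      rw [← Finset.mul_sum]
      linear_combination (-(ε * ∑ i, |w i|)) * hy2
  · rintro v ⟨x', hx', rfl⟩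
    apply hmono
    have : -y * ∑ i, w i * x' i
        = -y * ∑ i, w i * x i + ∑ i, (-y * w i) * (x' i - x i) := by
      rw [Finset.mul_sum, Finset.mul_sum, ← Finset.sum_add_distrib]
      exact Finset.sum_congr rfl fun i _ => by ring
    rw [this]
    apply add_le_add le_rfl
    rw [Finset.mul_sum]
    apply Finset.sum_le_sum
    intro i _
    calc (-y * w i) * (x' i - x i) ≤ |(-y * w i) * (x' i - x i)| := le_abs_self _
      _ = |w i| * |x' i - x i| := by rw [abs_mul, abs_mul, abs_neg, habsy, one_mul]
      _ ≤ |w i| * ε := mul_le_mul_of_nonneg_left (hx' i) (abs_nonneg _)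
      _ = ε * |w i| := mul_comm _ _
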